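/- Let $(\mathcal{C}^I, \mathcal{C}^F)$ be an $(n^I, k; n^F, \zeta k)$ MDS convertible code over $\mathbb{F}_q$ (not necessarily linear) with conversion procedure $T$, where $\mathcal{C}^I$ is an $(n^I, k)$ MDS code and $\mathcal{C}^F$ is an $(n^F, \zeta k)$ MDS code, $\zeta \geq 2$. If $n^I - k < n^F - \zeta k$, then the read access cost of any conversion procedure is at least $\zeta k$, i.e., for each $i \in [\zeta]$ the number of symbols accessed from the $i$-th initial codeword is at least $k$. -/
import Mathlib


/-- Read-access lower bound for MDS convertible codes in the merge regime:
if `n^I - k < n^F - ζk`, then any conversion procedure must read at least `k`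
symbols from each initial codeword (so the read access cost is at least `ζk`).

`EI`/`EF` are the encoders of the initial `(nI, k)` MDS code and of the final
`(nF, ζk)` MDS code (MDS expressed via the Singleton distance). For each
`i < ζ`, `U i` are the coordinates of remaining symbols of the `i`-th initial
codeword, placed in the final codeword by the injection `τ i`, and `Acc i` are
the coordinates accessed (read) from the `i`-th initial codeword. Every final
symbol is either inherited from some remaining symbol or is a function of the
accessed symbols only. -/
theorem stmt_19 (F : Type*) [Fintype F] [DecidableEq F] (hq : 1 < Fintype.card F)
    (ζ k nI nF : ℕ) (hζ : 2 ≤ ζ) (hk : 0 < k)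
    (hkI : k ≤ nI) (hkF : ζ * k ≤ nF) (hlt : nI - k < nF - ζ * k)
    (EI : (Fin k → F) → (Fin nI → F))
    (hMDSI : ∀ m m' : Fin k → F, m ≠ m' → nI - k + 1 ≤ hammingDist (EI m) (EI m'))
    (EF : (Fin ζ → Fin k → F) → (Fin nF → F))
    (hMDSF : ∀ m m' : Fin ζ → Fin k → F, m ≠ m' →
      nF - ζ * k + 1 ≤ hammingDist (EF m) (EF m'))
    (U : Fin ζ → Finset (Fin nI)) (τ : Fin ζ → Fin nI → Fin nF)
    (hτinj : ∀ i, Set.InjOn (τ i) (U i))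
    (hU : ∀ i, ∀ u ∈ U i, ∀ m : Fin ζ → Fin k → F, EF m (τ i u) = EI (m i) u)
    (Acc : Fin ζ → Finset (Fin nI))
    (hconv : ∀ j : Fin nF,
      (∃ i, ∃ u ∈ U i, τ i u = j) ∨
      (∀ m m' : Fin ζ → Fin k → F,
        (∀ i : Fin ζ, ∀ u ∈ Acc i, EI (m i) u = EI (m' i) u) → EF m j = EF m' j)) :
    ∀ i : Fin ζ, k ≤ (Acc i).card := by
  intro i
  by_contra hcon
  push_neg at hcon
  have hF : Nonempty F := Fintype.card_pos_iff.mp (by omega)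
  -- choose a superset S of Acc i of cardinality k - 1
  obtain ⟨S, hAS, -, hScard⟩ :=
    Finset.exists_subsuperset_card_eq (Finset.subset_univ (Acc i))
      (by omega : (Acc i).card ≤ k - 1)
      (by simpa using (by omega : k - 1 ≤ nI))
  -- pigeonhole: two messages whose initial encodings agree on S
  obtain ⟨x, x', hxx, hfeq⟩ :=
    Fintype.exists_ne_map_eq_of_card_lt (fun (x : Fin k → F) (s : {s // s ∈ S}) => EI x s.1)
      (by
        rw [Fintype.card_fun, Fintype.card_fun, Fintype.card_coe, hScard, Fintype.card_fin]
        exact Nat.pow_lt_pow_right hq (by omega))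
  have hS : ∀ u ∈ S, EI x u = EI x' u := fun u hu => congrFun hfeq ⟨u, hu⟩
  set c : Fin ζ → Fin k → F := fun _ _ => Classical.arbitrary F with hc
  set m : Fin ζ → Fin k → F := Function.update c i x with hm
  set m' : Fin ζ → Fin k → F := Function.update c i x' with hm'
  have hmi : m i = x := Function.update_self i x c
  have hm'i : m' i = x' := Function.update_self i x' c
  have hmne : m ≠ m' := by
    intro h
    exact hxx (by rw [← hmi, ← hm'i, h])
  have hagree : ∀ i' : Fin ζ, i' ≠ i → m i' = m' i' := by
    intro i' h
    simp [hm, hm', Function.update_of_ne h]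
  -- the two final codewords agree outside the image of the complement of S
  have hdiff : Finset.univ.filter (fun j => EF m j ≠ EF m' j) ⊆ Sᶜ.image (τ i) := by
    intro j hj
    rw [Finset.mem_filter] at hj
    obtain ⟨-, hj⟩ := hj
    rcases hconv j with ⟨i', u, hu, hju⟩ | hfun
    · by_cases hi' : i' = i
      · subst hi'
        refine Finset.mem_image.mpr ⟨u, ?_, hju⟩
        rw [Finset.mem_compl]
        intro huS
        exact hj (by rw [← hju, hU i' u hu m, hU i' u hu m', hmi, hm'i, hS u huS])
      · exact absurd (by rw [← hju, hU i' u hu m, hU i' u hu m', hagree i' hi']) hj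
    · refine absurd (hfun m m' ?_) hj
      intro i'' u hu
      by_cases hi'' : i'' = i
      · subst hi''
        rw [hmi, hm'i]
        exact hS u (hAS hu)
      · rw [hagree i'' hi'']
  have hle : hammingDist (EF m) (EF m') ≤ nI - (k - 1) := by
    calc hammingDist (EF m) (EF m')
        = (Finset.univ.filter (fun j => EF m j ≠ EF m' j)).card := rfl
      _ ≤ (Sᶜ.image (τ i)).card := Finset.card_le_card hdiff
      _ ≤ Sᶜ.card := Finset.card_image_le
      _ = nI - (k - 1) := by rw [Finset.card_compl, hScard, Fintype.card_fin]
  have := hMDSF m m' hmne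
  omega
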